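/- arXiv:1203.1997 — 2 statements merged into one kernel-verified Lean document; each statement's English description precedes it below -/
import Mathlib

section
/- Consider the network whose interference graph G is the 6-cycle on links K = {a, b, c, d, e, f}, and for a parameter p ∈ (0,1) the i.i.d. fading structure π_p(J) = p^{|J|}·(1−p)^{6−|J|} for J ⊆ K. Then there exists p_0 ∈ (0,1) such that for all p ∈ (0, p_0), σ*_G(π_p) > 2/3. (Since the non-fading local pooling factor of the 6-cycle equals 2/3, fading improves the relative performance of greedy maximal scheduling for this network when p is small.) -/
open scoped BigOperators
open Filter MeasureTheory ProbabilityTheory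

/-- `S` is an independent set of the interference graph `G` contained in the
set of links `J` (pairwise non-adjacent links). -/
def IsIndepIn {V : Type*} (G : SimpleGraph V) (J S : Finset V) : Prop :=
  S ⊆ J ∧ ∀ u ∈ S, ∀ v ∈ S, ¬ G.Adj u v

/-- `S` is a maximal independent set of `J`. -/
def IsMaxIndepIn {V : Type*} (G : SimpleGraph V) (J S : Finset V) : Prop :=
  IsIndepIn G J S ∧ ∀ T, IsIndepIn G J T → S ⊆ T → S = T

/-- 0/1 indicator vector of a finite set of links. -/
def indVec {V : Type*} [DecidableEq V] (S : Finset V) : V → ℝ :=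
  fun v => if v ∈ S then 1 else 0

/-- `M_{J,L}` : the (finite) set of 0/1 indicator vectors of the maximal independent
sets of `J`; the vectors are encoded in the ambient space `ℝ^V`, coordinates outside `J`
are automatically `0`. -/
def Mset {V : Type*} [DecidableEq V] (G : SimpleGraph V) (J : Finset V) : Set (V → ℝ) :=
  indVec '' {S | IsMaxIndepIn G J S}

/-- `CH(M_{J,L})` : the convex hull of `M_{J,L}`. -/
noncomputable def CHM {V : Type*} [DecidableEq V] (G : SimpleGraph V) (J : Finset V) :
    Set (V → ℝ) :=
  convexHull ℝ (Mset G J)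

/-- A fading structure `π` on the set of links: nonnegative weights summing to one. -/
def IsFading {V : Type*} [Fintype V] [DecidableEq V] (π : Finset V → ℝ) : Prop :=
  (∀ J, 0 ≤ π J) ∧ ∑ J : Finset V, π J = 1

/-- `Φ(L) = { Σ_{J ⊆ K} π(J) η_J : η_J ∈ CH(M_{J∩L,L}) }`. -/
def Phi {V : Type*} [Fintype V] [DecidableEq V] (G : SimpleGraph V) (π : Finset V → ℝ)
    (L : Finset V) : Set (V → ℝ) :=
  {φ | ∃ η : Finset V → V → ℝ, (∀ J, η J ∈ CHM G (J ∩ L)) ∧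
    φ = ∑ J : Finset V, π J • η J}

/-- The fading local pooling factor `σ*_L(π)` of a set of links `L`. -/
noncomputable def sigmaL {V : Type*} [Fintype V] [DecidableEq V] (G : SimpleGraph V)
    (π : Finset V → ℝ) (L : Finset V) : ℝ :=
  sInf {σ : ℝ | 0 ≤ σ ∧ ∃ φ1 ∈ Phi G π L, ∃ φ2 ∈ Phi G π L, ∀ v ∈ L, φ2 v ≤ σ * φ1 v}

/-- The Fading-LPF `σ*_G(π)` of the network: minimum of `σ*_L(π)` over nonempty `L ⊆ K`. -/
noncomputable def sigmaG {V : Type*} [Fintype V] [DecidableEq V] (G : SimpleGraph V)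
    (π : Finset V → ℝ) : ℝ :=
  sInf (sigmaL G π '' {L : Finset V | L.Nonempty})
/-- The marginal distribution `π_L` induced on a subset of links `L`. -/
noncomputable def marginal {V : Type*} [Fintype V] [DecidableEq V] (π : Finset V → ℝ)
    (L J : Finset V) : ℝ :=
  ∑ I : Finset V, if I ∩ L = J then π I else 0

/-- `n(M_J)`: minimum cardinality of a maximal independent set of `J`. -/
noncomputable def nM {V : Type*} (G : SimpleGraph V) (J : Finset V) : ℕ :=
  sInf (Finset.card '' {S | IsMaxIndepIn G J S})

/-- `N(M_J)`: maximum cardinality of a maximal independent set of `J`. -/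
noncomputable def NM {V : Type*} (G : SimpleGraph V) (J : Finset V) : ℕ :=
  sSup (Finset.card '' {S | IsMaxIndepIn G J S})

/-- interference degree of a link `l`: maximum cardinality of an independent set of `G`
contained in the closed neighborhood of `l`. -/
noncomputable def dI {V : Type*} (G : SimpleGraph V) (l : V) : ℕ :=
  sSup (Finset.card '' {S : Finset V | (∀ u ∈ S, ∀ v ∈ S, ¬ G.Adj u v) ∧
    ∀ v ∈ S, v = l ∨ G.Adj l v})

/-- interference degree `d_I(G)` of the whole interference graph. -/
noncomputable def dIG {V : Type*} (G : SimpleGraph V) : ℕ :=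
  sSup (Set.range (dI G))

/-- interference degree `d_I(S)` of the subgraph of `G` induced on the set of links `S`. -/
noncomputable def dISet {V : Type*} (G : SimpleGraph V) (Sset : Finset V) : ℕ :=
  sSup (Finset.card '' {T : Finset V | T ⊆ Sset ∧ (∀ u ∈ T, ∀ v ∈ T, ¬ G.Adj u v) ∧
    ∃ l ∈ Sset, ∀ v ∈ T, v = l ∨ G.Adj l v})

/-- The throughput region `Λ_f`. -/
def LambdaF {V : Type*} [Fintype V] [DecidableEq V] (G : SimpleGraph V) (π : Finset V → ℝ) :
    Set (V → ℝ) :=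
  {lam | (∀ v, 0 < lam v) ∧ ∃ η : Finset V → V → ℝ,
    (∀ J, η J ∈ CHM G J) ∧ ∀ v, lam v ≤ ∑ J : Finset V, π J * η J v}

/-- The scaled region `Λ_f(x)`. -/
def LambdaX {V : Type*} [Fintype V] [DecidableEq V] (G : SimpleGraph V) (π : Finset V → ℝ)
    (x : Finset V → ℝ) : Set (V → ℝ) :=
  {lam | (∀ v, 0 < lam v) ∧ ∃ η : Finset V → V → ℝ,
    (∀ J, η J ∈ CHM G J) ∧ ∀ v, lam v ≤ ∑ J : Finset V, x J * π J * η J v}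

/-- The standard (non-fading) local pooling factor of a graph `H`. -/
noncomputable def stdLPF (W : Type*) [Fintype W] [DecidableEq W] (H : SimpleGraph W) : ℝ :=
  sInf ((fun L => sInf {σ : ℝ | 0 ≤ σ ∧ ∃ φ1 ∈ CHM H L, ∃ φ2 ∈ CHM H L,
    ∀ v ∈ L, φ2 v ≤ σ * φ1 v}) '' {L : Finset W | L.Nonempty})

/-- discrete measurable structure on global channel states -/
instance {α : Type*} : MeasurableSpace (Finset α) := ⊤

/-- The queue-length process `Q` evolves according to
`Q_l[t+1] = (Q_l[t] − C_l[t]·1{l ∈ S[t]})⁺ + A_l[t]`, `Q_l[0] = 0`,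
where `GS t ω` is the set of 'ON' links and `S t ω` is the schedule. -/
def QueueEvol {V : Type*} [DecidableEq V] {Ω : Type*} (A : ℕ → V → Ω → ℕ)
    (GS S : ℕ → Ω → Finset V) (Q : ℕ → V → Ω → ℕ) : Prop :=
  (∀ l ω, Q 0 l ω = 0) ∧
  ∀ t l ω, Q (t + 1) l ω =
    (Q t l ω - (if l ∈ GS t ω ∧ l ∈ S t ω then 1 else 0)) + A t l ω

/-- `S` is a greedy maximal schedule for the weights `w`: a maximal independent set of `G`
with an enumeration `s_0, …, s_{k-1}` such that each `s_i` has maximal weight among the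
links neither equal nor adjacent to any of `s_0, …, s_{i-1}`. -/
def IsGreedySchedule {V : Type*} [Fintype V] [DecidableEq V] (G : SimpleGraph V)
    (w : V → ℝ) (S : Finset V) : Prop :=
  IsMaxIndepIn G Finset.univ S ∧
  ∃ s : ℕ → V, S = (Finset.range S.card).image s ∧
    (∀ i < S.card, ∀ j < S.card, s i = s j → i = j) ∧
    ∀ i < S.card, ∀ v : V, (∀ j < i, v ≠ s j ∧ ¬ G.Adj v (s j)) → w v ≤ w (s i)

/-- A GMS policy: at every time and in every sample point, the schedule is a greedy
maximal schedule for the weights `w_l = Q_l[t]·C_l[t]`. -/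
def IsGMSPolicy {V : Type*} [Fintype V] [DecidableEq V] {Ω : Type*} (G : SimpleGraph V)
    (GS S : ℕ → Ω → Finset V) (Q : ℕ → V → Ω → ℕ) : Prop :=
  ∀ t ω, IsGreedySchedule G
    (fun l => (Q t l ω : ℝ) * (if l ∈ GS t ω then 1 else 0)) (S t ω)

/-- The 6-cycle interference graph on the links `{a,b,c,d,e,f} = Fin 6`. -/
def C6 : SimpleGraph (Fin 6) := SimpleGraph.fromRel (fun u v => v = u + 1)

/-- The i.i.d. fading structure `π_p(J) = p^{|J|} (1-p)^{6-|J|}`. -/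
noncomputable def piHex (p : ℝ) : Finset (Fin 6) → ℝ := fun J =>
  p ^ J.card * (1 - p) ^ (6 - J.card)

section AuxLPF
set_option linter.unusedSectionVars false

lemma exists_maxIndep {V : Type*} [Fintype V] (G : SimpleGraph V) (J : Finset V) :
    ∃ S, IsMaxIndepIn G J S := by
  obtain ⟨S, hS, hmax⟩ := Set.Finite.exists_maximalFor id {S : Finset V | IsIndepIn G J S}
    (Set.toFinite _) ⟨∅, Finset.empty_subset J, by simp⟩
  exact ⟨S, hS, fun T hT hST => Finset.Subset.antisymm hST (hmax hT hST)⟩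

lemma sum_indVec {V : Type*} [DecidableEq V] {S L : Finset V} (hSL : S ⊆ L) :
    ∑ v ∈ L, indVec S v = S.card := by
  rw [← Finset.sum_subset hSL (fun x _ hx => by simp [indVec, hx])]
  simp [indVec]

lemma maxIndep_nonempty {V : Type*} (G : SimpleGraph V) {I : Finset V} (hI : I.Nonempty)
    {S} (hS : IsMaxIndepIn G I S) : S.Nonempty := by
  obtain ⟨v, hv⟩ := hI
  by_contra h
  rw [Finset.not_nonempty_iff_eq_empty] at h
  subst h
  have hv' : IsIndepIn G I {v} := ⟨Finset.singleton_subset_iff.2 hv, by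
    intro a ha b hb
    simp only [Finset.mem_singleton] at ha hb
    subst ha; subst hb; exact G.irrefl⟩
  exact Finset.singleton_ne_empty v (hS.2 {v} hv' (Finset.empty_subset _)).symm

lemma maxIndep_card_small {V : Type*} [DecidableEq V] (G : SimpleGraph V) {I : Finset V}
    (h1 : I.Nonempty) (h2 : I.card ≤ 2) :
    ∃ m : ℕ, 1 ≤ m ∧ ∀ S, IsMaxIndepIn G I S → S.card = m := by
  rcases Nat.lt_or_ge I.card 2 with h | h
  · have hc : I.card = 1 := le_antisymm (by omega) (Finset.one_le_card.2 h1)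
    obtain ⟨v, rfl⟩ := Finset.card_eq_one.1 hc
    refine ⟨1, le_refl 1, fun S hS => ?_⟩
    have hv : IsIndepIn G {v} {v} := ⟨subset_rfl, by
      intro a ha b hb
      simp only [Finset.mem_singleton] at ha hb
      subst ha; subst hb; exact G.irrefl⟩
    rcases Finset.subset_singleton_iff.1 hS.1.1 with rfl | rfl
    · rw [hS.2 {v} hv (Finset.empty_subset _)]; simp
    · simp
  · have hc : I.card = 2 := le_antisymm h2 h
    obtain ⟨u, v, huv, rfl⟩ := Finset.card_eq_two.1 hc
    by_cases hadj : G.Adj u v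
    · refine ⟨1, le_refl 1, fun S hS => ?_⟩
      have hne : S.Nonempty := maxIndep_nonempty G ⟨u, by simp⟩ hS
      have hc2 : S.card ≤ 2 := by
        have := Finset.card_le_card hS.1.1
        omega
      have h1' : 1 ≤ S.card := Finset.card_pos.2 hne
      rcases (show S.card = 1 ∨ S.card = 2 by omega) with h' | h'
      · exact h'
      · exfalso
        have hSe : S = {u, v} := Finset.eq_of_subset_of_card_le hS.1.1 (by omega)
        exact hS.1.2 u (by simp [hSe]) v (by simp [hSe]) hadj
    · refine ⟨2, by norm_num, fun S hS => ?_⟩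
      have hvu : ¬ G.Adj v u := fun h' => hadj h'.symm
      have hI : IsIndepIn G {u, v} {u, v} := ⟨subset_rfl, by
        intro a ha b hb
        simp only [Finset.mem_insert, Finset.mem_singleton] at ha hb
        rcases ha with rfl | rfl <;> rcases hb with rfl | rfl <;>
          simp [G.irrefl, hadj, hvu]⟩
      rw [hS.2 _ hI hS.1.1]
      exact Finset.card_pair huv

lemma boxCHM {V : Type*} [DecidableEq V] (G : SimpleGraph V) {I L : Finset V} (hIL : I ⊆ L)
    {a b : ℝ} (hab : ∀ S, IsMaxIndepIn G I S → a ≤ (S.card : ℝ) ∧ (S.card : ℝ) ≤ b)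
    {η : V → ℝ} (hη : η ∈ CHM G I) :
    (∀ v, 0 ≤ η v ∧ η v ≤ 1) ∧ a ≤ ∑ v ∈ L, η v ∧ ∑ v ∈ L, η v ≤ b := by
  set C : Set (V → ℝ) :=
    {x | (∀ v, 0 ≤ x v ∧ x v ≤ 1) ∧ a ≤ ∑ v ∈ L, x v ∧ ∑ v ∈ L, x v ≤ b} with hC
  have hconv : Convex ℝ C := by
    intro x hx y hy s t hs ht hst
    obtain ⟨hx1, hx2, hx3⟩ := hx
    obtain ⟨hy1, hy2, hy3⟩ := hy
    have hsum : ∑ v ∈ L, (s • x + t • y) v = s * (∑ v ∈ L, x v) + t * (∑ v ∈ L, y v) := by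
      simp only [Pi.add_apply, Pi.smul_apply, smul_eq_mul, Finset.sum_add_distrib,
        Finset.mul_sum]
    refine ⟨fun v => ?_, ?_, ?_⟩
    · have h1 := hx1 v; have h2 := hy1 v
      simp only [Pi.add_apply, Pi.smul_apply, smul_eq_mul]
      constructor <;> nlinarith
    · rw [hsum]
      have ha : s * a + t * a = a := by rw [← add_mul, hst, one_mul]
      nlinarith [mul_le_mul_of_nonneg_left hx2 hs, mul_le_mul_of_nonneg_left hy2 ht]
    · rw [hsum]
      have hb : s * b + t * b = b := by rw [← add_mul, hst, one_mul]
      nlinarith [mul_le_mul_of_nonneg_left hx3 hs, mul_le_mul_of_nonneg_left hy3 ht]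
  have hsub : Mset G I ⊆ C := by
    rintro _ ⟨S, hS, rfl⟩
    have hSL : S ⊆ L := hS.1.1.trans hIL
    refine ⟨fun v => ?_, ?_, ?_⟩
    · unfold indVec; split <;> norm_num
    · rw [sum_indVec hSL]; exact (hab S hS).1
    · rw [sum_indVec hSL]; exact (hab S hS).2
  exact convexHull_min hsub hconv hη

lemma delta_pos {p : ℝ} (hp : 0 < p) (hp' : p < 1/100) :
    0 < p * (1 - p) ^ 5 - 768 * p ^ 3 := by
  have h99 : (99/100 : ℝ) ≤ 1 - p := by linarith
  have h5 : ((99 : ℝ)/100) ^ 5 ≤ (1 - p) ^ 5 := pow_le_pow_left₀ (by norm_num) h99 5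
  have hpp : p * p ≤ (1/100 : ℝ) * (1/100) := by nlinarith
  nlinarith [mul_le_mul_of_nonneg_left h5 hp.le, mul_le_mul_of_nonneg_left hpp hp.le]

lemma keyL {p : ℝ} (hp : 0 < p) (hp' : p < 1/100) {L : Finset (Fin 6)} (hL : L.Nonempty) :
    2/3 + (p * (1 - p) ^ 5 - 768 * p ^ 3) / 1152 ≤ sigmaL C6 (piHex p) L := by
  classical
  have hp1 : p < 1 := by linarith
  have hπ0 : ∀ J : Finset (Fin 6), 0 ≤ piHex p J := fun J =>
    mul_nonneg (pow_nonneg hp.le _) (pow_nonneg (by linarith) _)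
  have hπ1 : ∀ J : Finset (Fin 6), piHex p J ≤ 1 := fun J =>
    mul_le_one₀ (pow_le_one₀ hp.le hp1.le) (pow_nonneg (by linarith) _)
      (pow_le_one₀ (by linarith) (by linarith))
  apply le_csInf
  · choose Smax hSmax using fun J : Finset (Fin 6) => exists_maxIndep C6 (J ∩ L)
    have hmemf : ∀ J : Finset (Fin 6), indVec (Smax J) ∈ CHM C6 (J ∩ L) := fun J =>
      subset_convexHull ℝ _ ⟨Smax J, hSmax J, rfl⟩
    refine ⟨1, zero_le_one,
      ∑ J : Finset (Fin 6), piHex p J • indVec (Smax J),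
      ⟨fun J => indVec (Smax J), hmemf, rfl⟩,
      ∑ J : Finset (Fin 6), piHex p J • indVec (Smax J),
      ⟨fun J => indVec (Smax J), hmemf, rfl⟩,
      fun v _ => le_of_eq (one_mul _).symm⟩
  · rintro σ ⟨hσ0, φ1, ⟨η1, hη1, rfl⟩, φ2, ⟨η2, hη2, rfl⟩, hle⟩
    have hab6 : ∀ I : Finset (Fin 6), ∀ S, IsMaxIndepIn C6 I S →
        (0 : ℝ) ≤ S.card ∧ (S.card : ℝ) ≤ 6 := by
      intro I S hS
      refine ⟨Nat.cast_nonneg _, ?_⟩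
      have h6 : S.card ≤ 6 := le_trans (Finset.card_le_univ S) (by simp)
      exact_mod_cast h6
    have hbox1 := fun J : Finset (Fin 6) =>
      boxCHM C6 Finset.inter_subset_right (hab6 (J ∩ L)) (hη1 J)
    have hbox2 := fun J : Finset (Fin 6) =>
      boxCHM C6 Finset.inter_subset_right (hab6 (J ∩ L)) (hη2 J)
    set T1 : ℝ := ∑ J : Finset (Fin 6), piHex p J * (∑ v ∈ L, η1 J v) with hT1def
    set T2 : ℝ := ∑ J : Finset (Fin 6), piHex p J * (∑ v ∈ L, η2 J v) with hT2def
    have hswap1 : ∑ v ∈ L, (∑ J : Finset (Fin 6), piHex p J • η1 J) v = T1 := by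
      rw [hT1def]
      simp only [Finset.sum_apply, Pi.smul_apply, smul_eq_mul, Finset.mul_sum]
      rw [Finset.sum_comm]
    have hswap2 : ∑ v ∈ L, (∑ J : Finset (Fin 6), piHex p J • η2 J) v = T2 := by
      rw [hT2def]
      simp only [Finset.sum_apply, Pi.smul_apply, smul_eq_mul, Finset.mul_sum]
      rw [Finset.sum_comm]
    have hT2σ : T2 ≤ σ * T1 := by
      rw [← hswap1, ← hswap2, Finset.mul_sum]
      exact Finset.sum_le_sum hle
    set P : Finset (Fin 6) → Prop := fun J => 1 ≤ (J ∩ L).card ∧ (J ∩ L).card ≤ 2 with hP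
    have hmain : p * (1 - p) ^ 5 - 768 * p ^ 3 ≤ 3 * T2 - 2 * T1 := by
      have heq : 3 * T2 - 2 * T1 = ∑ J : Finset (Fin 6),
          piHex p J * (3 * (∑ v ∈ L, η2 J v) - 2 * (∑ v ∈ L, η1 J v)) := by
        rw [hT1def, hT2def, Finset.mul_sum, Finset.mul_sum, ← Finset.sum_sub_distrib]
        exact Finset.sum_congr rfl (fun J _ => by ring)
      rw [heq, ← Finset.sum_filter_add_sum_filter_not Finset.univ P]
      have hgood : ∀ J ∈ Finset.univ.filter P,
          (1 : ℝ) ≤ 3 * (∑ v ∈ L, η2 J v) - 2 * (∑ v ∈ L, η1 J v) := by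
        intro J hJ
        rw [Finset.mem_filter, hP] at hJ
        obtain ⟨m, hm1, hm⟩ := maxIndep_card_small C6 (Finset.card_pos.1 hJ.2.1) hJ.2.2
        have habm : ∀ S, IsMaxIndepIn C6 (J ∩ L) S →
            (m : ℝ) ≤ S.card ∧ (S.card : ℝ) ≤ m := by
          intro S hS
          rw [hm S hS]
          exact ⟨le_refl _, le_refl _⟩
        have h1 := boxCHM C6 Finset.inter_subset_right habm (hη1 J)
        have h2 := boxCHM C6 Finset.inter_subset_right habm (hη2 J)
        have hm1' : (1 : ℝ) ≤ m := by exact_mod_cast hm1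
        linarith [h2.2.1, h1.2.2]
      have hApart : p * (1 - p) ^ 5 ≤ ∑ J ∈ Finset.univ.filter P,
          piHex p J * (3 * (∑ v ∈ L, η2 J v) - 2 * (∑ v ∈ L, η1 J v)) := by
        obtain ⟨v0, hv0⟩ := hL
        have hint : ({v0} : Finset (Fin 6)) ∩ L = {v0} := by
          rw [Finset.inter_eq_left]
          exact Finset.singleton_subset_iff.2 hv0
        have hmem : ({v0} : Finset (Fin 6)) ∈ Finset.univ.filter P := by
          rw [Finset.mem_filter, hP]
          refine ⟨Finset.mem_univ _, ?_⟩
          simp [hint]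
        have hval : piHex p {v0} = p * (1 - p) ^ 5 := by
          unfold piHex
          rw [Finset.card_singleton]
          norm_num
        have hnn : ∀ J ∈ Finset.univ.filter P,
            0 ≤ piHex p J * (3 * (∑ v ∈ L, η2 J v) - 2 * (∑ v ∈ L, η1 J v)) :=
          fun J hJ => mul_nonneg (hπ0 J) (by linarith [hgood J hJ])
        calc p * (1 - p) ^ 5 = piHex p {v0} * 1 := by rw [hval, mul_one]
          _ ≤ piHex p {v0} *
              (3 * (∑ v ∈ L, η2 {v0} v) - 2 * (∑ v ∈ L, η1 {v0} v)) :=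
            mul_le_mul_of_nonneg_left (hgood _ hmem) (hπ0 _)
          _ ≤ ∑ J ∈ Finset.univ.filter P,
              piHex p J * (3 * (∑ v ∈ L, η2 J v) - 2 * (∑ v ∈ L, η1 J v)) :=
            Finset.single_le_sum hnn hmem
      have hBpart : -(768 * p ^ 3) ≤ ∑ J ∈ Finset.univ.filter (fun J => ¬ P J),
          piHex p J * (3 * (∑ v ∈ L, η2 J v) - 2 * (∑ v ∈ L, η1 J v)) := by
        have hterm : ∀ J ∈ Finset.univ.filter (fun J => ¬ P J),
            -(12 * p ^ 3) ≤ piHex p J *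
              (3 * (∑ v ∈ L, η2 J v) - 2 * (∑ v ∈ L, η1 J v)) := by
          intro J hJ
          rw [Finset.mem_filter, hP] at hJ
          have hJ2 := hJ.2
          rcases Nat.lt_or_ge (J ∩ L).card 1 with hc | hc
          · have he : J ∩ L = ∅ := Finset.card_eq_zero.1 (by omega)
            have hab0 : ∀ S, IsMaxIndepIn C6 (J ∩ L) S →
                (0 : ℝ) ≤ S.card ∧ (S.card : ℝ) ≤ 0 := by
              intro S hS
              have hSe : S = ∅ := Finset.subset_empty.1 (he ▸ hS.1.1)
              simp [hSe]
            have h1 := boxCHM C6 Finset.inter_subset_right hab0 (hη1 J)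
            have h2 := boxCHM C6 Finset.inter_subset_right hab0 (hη2 J)
            have hs1 : ∑ v ∈ L, η1 J v = 0 := le_antisymm h1.2.2 h1.2.1
            have hs2 : ∑ v ∈ L, η2 J v = 0 := le_antisymm h2.2.2 h2.2.1
            rw [hs1, hs2]
            nlinarith [pow_pos hp 3]
          · have hc3 : 3 ≤ (J ∩ L).card := by omega
            have hJc : 3 ≤ J.card :=
              le_trans hc3 (Finset.card_le_card Finset.inter_subset_left)
            have hπp3 : piHex p J ≤ p ^ 3 := by
              unfold piHex
              calc p ^ J.card * (1 - p) ^ (6 - J.card)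
                  ≤ p ^ J.card * 1 :=
                    mul_le_mul_of_nonneg_left
                      (pow_le_one₀ (by linarith) (by linarith)) (pow_nonneg hp.le _)
                _ = p ^ J.card := mul_one _
                _ ≤ p ^ 3 := pow_le_pow_of_le_one hp.le hp1.le hJc
            have h1 := hbox1 J
            have h2 := hbox2 J
            nlinarith [hπ0 J, pow_pos hp 3, h1.2.1, h1.2.2, h2.2.1, h2.2.2,
              mul_nonneg (hπ0 J) h2.2.1,
              mul_le_mul hπp3 h1.2.2 h1.2.1 (pow_pos hp 3).le]
        have hcard : ((Finset.univ.filter (fun J => ¬ P J)).card : ℝ) ≤ 64 := by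
          have hle64 := Finset.card_filter_le (Finset.univ : Finset (Finset (Fin 6)))
            (fun J => ¬ P J)
          have h64 : (Finset.univ : Finset (Finset (Fin 6))).card = 64 := by
            rw [Finset.card_univ, Fintype.card_finset, Fintype.card_fin]
            norm_num
          rw [h64] at hle64
          exact_mod_cast hle64
        calc -(768 * p ^ 3)
            ≤ (Finset.univ.filter (fun J => ¬ P J)).card • (-(12 * p ^ 3)) := by
              rw [nsmul_eq_mul]
              nlinarith [pow_pos hp 3,
                mul_nonneg (sub_nonneg.2 hcard) (pow_pos hp 3).le]
          _ ≤ ∑ J ∈ Finset.univ.filter (fun J => ¬ P J),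
              piHex p J * (3 * (∑ v ∈ L, η2 J v) - 2 * (∑ v ∈ L, η1 J v)) :=
            Finset.card_nsmul_le_sum _ _ _ hterm
      linarith [hApart, hBpart]
    have hδ : 0 < p * (1 - p) ^ 5 - 768 * p ^ 3 := delta_pos hp hp'
    have hT1nonneg : 0 ≤ T1 :=
      Finset.sum_nonneg fun J _ => mul_nonneg (hπ0 J) (hbox1 J).2.1
    have hT1le : T1 ≤ 384 := by
      rw [hT1def]
      calc ∑ J : Finset (Fin 6), piHex p J * (∑ v ∈ L, η1 J v)
          ≤ ∑ _J : Finset (Fin 6), (6 : ℝ) :=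
            Finset.sum_le_sum fun J _ => by
              have := mul_le_mul (hπ1 J) (hbox1 J).2.2 (hbox1 J).2.1 zero_le_one
              linarith
        _ = 384 := by
            rw [Finset.sum_const, Finset.card_univ, Fintype.card_finset, Fintype.card_fin]
            norm_num

    have hT1pos : 0 < T1 := by
      rcases hT1nonneg.lt_or_eq with h | h
      · exact h
      · exfalso
        rw [← h, mul_zero] at hT2σ
        linarith
    nlinarith [hT2σ, hmain, hδ, hT1pos, hT1le,
      mul_le_mul_of_nonneg_left hT1le hδ.le]

end AuxLPF

/-- **Example A.** For the 6-cycle with i.i.d. fading, there is a `p₀ ∈ (0,1)` such that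
for all `p ∈ (0, p₀)` the Fading-LPF exceeds `2/3`, the non-fading local pooling factor
of the 6-cycle: fading improves the relative performance of GMS. -/
theorem example_A_fading_helps :
    ∃ p0 : ℝ, 0 < p0 ∧ p0 < 1 ∧
      ∀ p : ℝ, 0 < p → p < p0 → 2 / 3 < sigmaG C6 (piHex p) := by
  refine ⟨1/100, by norm_num, by norm_num, fun p hp hp' => ?_⟩
  have key : 2/3 + (p * (1 - p) ^ 5 - 768 * p ^ 3) / 1152 ≤ sigmaG C6 (piHex p) := by
    apply le_csInf
    · exact ⟨sigmaL C6 (piHex p) Finset.univ, ⟨Finset.univ, Finset.univ_nonempty, rfl⟩⟩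
    · rintro x ⟨L, hL, rfl⟩
      exact keyL hp hp' hL
  have hδ := delta_pos hp hp'
  linarith
end

section
/- Fix a network (K, G) with fading structure π and a nonempty L ⊆ K. If Σ_{J⊆L} π_L(J)·N(M_J) > 0, then the lower bound of the paper's Theorem 3 always dominates the inverse interference degree: Σ_{J⊆L} π_L(J)·n(M_J) ≥ (1/d_I(G)) · Σ_{J⊆L} π_L(J)·N(M_J). -/
open scoped BigOperators
open Filter MeasureTheory ProbabilityTheory

section Aux

variable {V : Type*} [Fintype V] [DecidableEq V] (G : SimpleGraph V)

lemma aux_bddAbove_cards (P : Finset V → Prop) :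
    BddAbove (Finset.card '' {S | P S}) := by
  refine ⟨Fintype.card V, ?_⟩
  rintro n ⟨S, _, rfl⟩
  exact Finset.card_le_univ S

lemma aux_exists_maxIndep (J : Finset V) : ∃ S, IsMaxIndepIn G J S := by
  classical
  have hne : ({S ∈ J.powerset | ∀ u ∈ S, ∀ v ∈ S, ¬ G.Adj u v} : Finset (Finset V)).Nonempty := by
    refine ⟨∅, ?_⟩
    simp
  obtain ⟨S, hS, hmax⟩ := Finset.exists_max_image _ Finset.card hne
  simp only [Finset.mem_filter, Finset.mem_powerset] at hS
  refine ⟨S, ⟨hS.1, hS.2⟩, ?_⟩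
  intro T hT hST
  by_contra hne'
  have hlt : S.card < T.card :=
    Finset.card_lt_card (lt_of_le_of_ne hST hne')
  have hTmem : T ∈ ({S ∈ J.powerset | ∀ u ∈ S, ∀ v ∈ S, ¬ G.Adj u v} : Finset (Finset V)) := by
    simp only [Finset.mem_filter, Finset.mem_powerset]
    exact ⟨hT.1, hT.2⟩
  exact absurd (hmax T hTmem) (not_le.mpr hlt)

lemma aux_dI_le_dIG (l : V) : dI G l ≤ dIG G := by
  apply le_csSup
  · refine ⟨Fintype.card V, ?_⟩
    rintro n ⟨m, rfl⟩
    refine csSup_le ⟨0, ∅, by simp⟩ ?_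
    rintro x ⟨S, _, rfl⟩
    exact Finset.card_le_univ S
  · exact ⟨l, rfl⟩

lemma aux_card_le_dIG_mul {J S T : Finset V}
    (hS : IsMaxIndepIn G J S) (hT : IsMaxIndepIn G J T) :
    S.card ≤ dIG G * T.card := by
  classical
  -- every s ∈ S is in the closed neighborhood of some t ∈ T
  have hcover : ∀ s ∈ S, ∃ t ∈ T, s = t ∨ G.Adj t s := by
    intro s hs
    by_contra hcon
    push_neg at hcon
    have hindep : IsIndepIn G J (insert s T) := by
      constructor
      · intro x hx
        rcases Finset.mem_insert.mp hx with rfl | hx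
        · exact hS.1.1 hs
        · exact hT.1.1 hx
      · intro u hu v hv
        rcases Finset.mem_insert.mp hu with hu | hu <;>
          rcases Finset.mem_insert.mp hv with hv | hv
        · rw [hu, hv]; exact G.irrefl
        · rw [hu]; intro h; exact (hcon v hv).2 (G.adj_symm h)
        · rw [hv]; exact (hcon u hu).2
        · exact hT.1.2 u hu v hv
    have := hT.2 _ hindep (Finset.subset_insert _ _)
    have hsT : s ∈ T := this ▸ Finset.mem_insert_self s T
    exact (hcon s hsT).1 rfl
  set f : V → V := fun s =>
    if h : ∃ t ∈ T, s = t ∨ G.Adj t s then h.choose else s with hf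
  have hfmem : ∀ s ∈ S, f s ∈ T ∧ (s = f s ∨ G.Adj (f s) s) := by
    intro s hs
    have h := hcover s hs
    simp only [hf, dif_pos h]
    exact ⟨h.choose_spec.1, h.choose_spec.2⟩
  have hcardeq : S.card = ∑ t ∈ T, (S.filter (fun s => f s = t)).card :=
    Finset.card_eq_sum_card_fiberwise (fun s hs => (hfmem s hs).1)
  rw [hcardeq, mul_comm]
  have : ∀ t ∈ T, (S.filter (fun s => f s = t)).card ≤ dIG G := by
    intro t _
    refine le_trans ?_ (aux_dI_le_dIG G t)
    apply le_csSup (aux_bddAbove_cards _)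
    refine ⟨S.filter (fun s => f s = t), ⟨?_, ?_⟩, rfl⟩
    · intro u hu v hv
      exact hS.1.2 u (Finset.mem_of_mem_filter u hu) v (Finset.mem_of_mem_filter v hv)
    · intro v hv
      have hv' := Finset.mem_filter.mp hv
      have := (hfmem v hv'.1).2
      rw [hv'.2] at this
      exact this
  calc ∑ t ∈ T, (S.filter (fun s => f s = t)).card ≤ ∑ _t ∈ T, dIG G :=
        Finset.sum_le_sum this
    _ = T.card * dIG G := by rw [Finset.sum_const, smul_eq_mul]

lemma aux_NM_le (J : Finset V) : NM G J ≤ dIG G * nM G J := by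
  classical
  have hne : (Finset.card '' {S | IsMaxIndepIn G J S}).Nonempty := by
    obtain ⟨S, hS⟩ := aux_exists_maxIndep G J
    exact ⟨S.card, S, hS, rfl⟩
  obtain ⟨S, hS, hScard⟩ := Nat.sSup_mem hne (aux_bddAbove_cards _)
  obtain ⟨T, hT, hTcard⟩ := Nat.sInf_mem hne
  rw [NM, ← hScard, nM, ← hTcard]
  exact aux_card_le_dIG_mul G hS hT

lemma aux_marginal_nonneg (π : Finset V → ℝ) (hπ : IsFading π) (L J : Finset V) :
    0 ≤ marginal π L J :=
  Finset.sum_nonneg fun I _ => by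
    split <;> [exact hπ.1 I; exact le_refl 0]

end Aux

/-- The lower bound of Theorem 3 dominates the inverse interference degree:
`Σ_{J⊆L} π_L(J) n(M_J) ≥ (1/d_I(G)) Σ_{J⊆L} π_L(J) N(M_J)`. -/
theorem lower_bound_dominates_inverse_degree {V : Type*} [Fintype V] [DecidableEq V]
    (G : SimpleGraph V) (π : Finset V → ℝ) (hπ : IsFading π)
    (L : Finset V) (hL : L.Nonempty)
    (hpos : 0 < ∑ J ∈ L.powerset, marginal π L J * (NM G J : ℝ)) :
    (1 / (dIG G : ℝ)) * ∑ J ∈ L.powerset, marginal π L J * (NM G J : ℝ) ≤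
      ∑ J ∈ L.powerset, marginal π L J * (nM G J : ℝ) := by
  have hRHS : 0 ≤ ∑ J ∈ L.powerset, marginal π L J * (nM G J : ℝ) :=
    Finset.sum_nonneg fun J _ =>
      mul_nonneg (aux_marginal_nonneg π hπ L J) (Nat.cast_nonneg _)
  rcases Nat.eq_zero_or_pos (dIG G) with hd | hd
  · simp [hd, hRHS]
  · have hdpos : (0 : ℝ) < (dIG G : ℝ) := by exact_mod_cast hd
    rw [one_div, inv_mul_le_iff₀ hdpos, mul_comm, Finset.sum_mul]
    refine Finset.sum_le_sum fun J _ => ?_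
    rw [mul_assoc]
    refine mul_le_mul_of_nonneg_left ?_ (aux_marginal_nonneg π hπ L J)
    calc (NM G J : ℝ) ≤ ((dIG G * nM G J : ℕ) : ℝ) := by
          exact_mod_cast aux_NM_le G J
      _ = (nM G J : ℝ) * (dIG G : ℝ) := by push_cast; ring
end
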